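/- Let K = ℚ(ζ₅) with ring of integers 𝓞, let ι : K → ℂ be the embedding with ι(ζ₅) = exp(2πi/5) and σ : K → ℂ the embedding with σ(ζ₅) = exp(4πi/5), and let S = {z ∈ 𝓞 : |σ(z)| ≤ 1}. For every z ∈ S there exists z' ∈ S with z' ≠ z and |ι(z') − ι(z)| ≤ 1; in other words, the minimum distance from ι(z) to the rest of ι(S) is at most 1. -/

import Mathlib

open NumberField

open Complex ComplexConjugate in
private lemma stmt_7_cos (β : ℝ) (h1 : 4*Real.pi/5 ≤ β) (h2 : β ≤ 6*Real.pi/5) :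
    Real.cos β ≤ Real.cos (4*Real.pi/5) := by
  have hπ := Real.pi_pos
  rcases le_total β Real.pi with hβ | hβ
  · exact Real.cos_le_cos_of_nonneg_of_le_pi (by linarith) hβ h1
  · have : Real.cos β = Real.cos (2*Real.pi - β) := by rw [Real.cos_two_pi_sub]
    rw [this]
    exact Real.cos_le_cos_of_nonneg_of_le_pi (by linarith) (by linarith) (by linarith)

open Complex ComplexConjugate in
private lemma stmt_7_key (w : ℂ) (hw : ‖w‖ ≤ 1) :
    ∃ j : ℤ, ‖w + Complex.exp ((2 * Real.pi * j / 5 : ℝ) * Complex.I)‖ ≤ 1 := by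
  have hπ := Real.pi_pos
  set θ := w.arg with hθ
  set x : ℝ := 5*θ/(2*Real.pi) with hx
  set j : ℤ := ⌈x⌉ + 2 with hj
  refine ⟨j, ?_⟩
  set c : ℂ := Complex.exp ((2 * Real.pi * j / 5 : ℝ) * Complex.I) with hc
  set β : ℝ := 2*Real.pi*j/5 - θ with hβ
  have hceil1 : (x : ℝ) ≤ ⌈x⌉ := Int.le_ceil _
  have hceil2 : (⌈x⌉ : ℝ) < x + 1 := Int.ceil_lt_add_one _
  have hj' : (j : ℝ) = (⌈x⌉ : ℝ) + 2 := by push_cast [hj]; ring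
  have hxθ : x * (2*Real.pi/5) = θ := by rw [hx]; field_simp
  have hβ1 : 4*Real.pi/5 ≤ β := by
    rw [hβ, hj']
    nlinarith [mul_le_mul_of_nonneg_right hceil1 (by positivity : (0:ℝ) ≤ 2*Real.pi/5)]
  have hβ2 : β ≤ 6*Real.pi/5 := by
    rw [hβ, hj']
    nlinarith [mul_le_mul_of_nonneg_right hceil2.le (by positivity : (0:ℝ) ≤ 2*Real.pi/5)]
  have hcos : Real.cos β ≤ Real.cos (4*Real.pi/5) := stmt_7_cos β hβ1 hβ2
  have hcos45 : Real.cos (4*Real.pi/5) = -((1+Real.sqrt 5)/4) := by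
    have h4 : (4*Real.pi/5 : ℝ) = Real.pi - Real.pi/5 := by ring
    rw [h4, Real.cos_pi_sub, Real.cos_pi_div_five]
  have habs : ‖c‖ = 1 := by rw [hc, Complex.norm_exp]; simp
  have hwc : w * conj c = ((‖w‖ : ℝ) : ℂ) * Complex.exp (((-β : ℝ):ℂ) * Complex.I) := by
    conv_lhs => rw [← Complex.norm_mul_exp_arg_mul_I w]
    rw [hc, ← Complex.exp_conj]
    simp only [map_mul, Complex.conj_ofReal, Complex.conj_I, mul_neg]
    rw [mul_assoc, ← Complex.exp_add]
    congr 1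
    rw [hβ, hθ]; push_cast; ring
  have hre : (w * conj c).re = ‖w‖ * Real.cos β := by
    rw [hwc, Complex.re_ofReal_mul, Complex.exp_ofReal_mul_I_re, Real.cos_neg]
  have hns : Complex.normSq (w + c) = ‖w‖^2 + 1 + 2 * (‖w‖ * Real.cos β) := by
    rw [Complex.normSq_add, ← Complex.sq_norm, ← Complex.sq_norm c, habs, hre]
    ring
  have hs5 : (2:ℝ) ≤ Real.sqrt 5 := by
    nlinarith [Real.sq_sqrt (by norm_num : (5:ℝ) ≥ 0), Real.sqrt_nonneg 5]
  have habsnn : 0 ≤ ‖w‖ := norm_nonneg w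
  have hle : Complex.normSq (w + c) ≤ 1 := by
    rw [hns]
    nlinarith [mul_le_mul_of_nonneg_left hcos habsnn]
  nlinarith [Complex.sq_norm (w + c), norm_nonneg (w + c)]

/-- For `K = ℚ(ζ₅)`, embeddings `ι, σ` as in the paper, and `S = {z ∈ 𝓞 | |σ z| ≤ 1}`:
for every `z ∈ S` there exists `z' ∈ S` with `z' ≠ z` and `|ι z' - ι z| ≤ 1`. -/
theorem stmt_7 (K : Type*) [Field K] [NumberField K] [IsCyclotomicExtension {5} ℚ K]
    (ζ : 𝓞 K) (hζ : IsPrimitiveRoot (ζ : K) 5)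
    (ι σ : K →+* ℂ)
    (hι : ι (ζ : K) = Complex.exp (2 * Real.pi * Complex.I / 5))
    (hσ : σ (ζ : K) = Complex.exp (4 * Real.pi * Complex.I / 5))
    (S : Set (𝓞 K)) (hS : S = {z : 𝓞 K | ‖σ (z : K)‖ ≤ 1})
    (z : 𝓞 K) (hz : z ∈ S) :
    ∃ z' ∈ S, z' ≠ z ∧ ‖ι (z' : K) - ι (z : K)‖ ≤ 1 := by
  rw [hS] at hz
  obtain ⟨j, hj⟩ := stmt_7_key (σ (z : K)) hz
  set m : ℕ := ((3*j) % 5).toNat with hm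
  have hm5 : (m : ℤ) = (3*j) % 5 := Int.toNat_of_nonneg (Int.emod_nonneg _ (by norm_num))
  obtain ⟨k, hk⟩ : ∃ k : ℤ, 2*(m:ℤ) = j + 5*k := by
    refine ⟨(2*((3*j)%5) - j)/5, ?_⟩
    rw [hm5]; omega
  have hσ' : σ ((ζ : K)^m) = Complex.exp ((2 * Real.pi * j / 5 : ℝ) * Complex.I) := by
    rw [map_pow, hσ]
    rw [← Complex.exp_nat_mul]
    rw [show (m:ℂ) * (4 * (Real.pi:ℂ) * Complex.I / 5)
        = ((2 * Real.pi * j / 5 : ℝ) : ℂ) * Complex.I + k * (2 * (Real.pi:ℂ) * Complex.I) by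
      push_cast
      have : (2:ℂ) * (m:ℂ) = (j:ℂ) + 5*(k:ℂ) := by exact_mod_cast hk
      linear_combination (2 * (Real.pi:ℂ) * Complex.I / 5) * this]
    rw [Complex.exp_add, Complex.exp_int_mul_two_pi_mul_I, mul_one]
  have hcoe : ((z + ζ^m : 𝓞 K) : K) = (z : K) + (ζ : K)^m := by push_cast; ring
  refine ⟨z + ζ^m, ?_, ?_, ?_⟩
  · rw [hS]
    show ‖σ ((z + ζ^m : 𝓞 K) : K)‖ ≤ 1
    rw [hcoe, map_add, hσ']
    exact hj
  · intro h
    have h0 : ζ^m = 0 := by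
      have := congrArg (· - z) h
      simpa [add_sub_cancel_left] using this
    have : σ ((ζ:K)^m) = 0 := by
      rw [show (ζ:K)^m = (((ζ^m : 𝓞 K)) : K) by push_cast; ring, h0]
      simp
    rw [hσ'] at this
    exact Complex.exp_ne_zero _ this
  · rw [hcoe, map_add, add_sub_cancel_left, map_pow, hι, ← Complex.exp_nat_mul,
      Complex.norm_exp]
    norm_num [Complex.div_re]
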